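/- For every k ≥ 2 and every n ≥ 2 there exist n points x_1, …, x_n in the unit cube [0,1]^k ⊂ ℝ^k (points may coincide) such that every Hamiltonian cycle (cyclic ordering) y_1, …, y_n of these points satisfies Σ_{i=1}^n |y_i - y_{i+1}|^k ≥ 2·k^{k/2} (indices mod n); that is, the shortest tour has scaled cost at least 2^{1/k}·√k. -/

import Mathlib

/-- For every `k ≥ 2` and `n ≥ 2` there exist `n` points in `[0,1]^k` (possibly coinciding)
such that every cyclic ordering (Hamiltonian cycle) of the points has unscaled cost at least
`2·k^{k/2}`, i.e. scaled cost at least `2^{1/k}·√k`. -/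
theorem stmt_6 (k n : ℕ) (hk : 2 ≤ k) (hn : 2 ≤ n) [NeZero n] :
    ∃ x : Fin n → EuclideanSpace ℝ (Fin k),
      (∀ j, ∀ i, x j i ∈ Set.Icc (0 : ℝ) 1) ∧
      ∀ σ : Equiv.Perm (Fin n),
        2 * Real.sqrt k ^ k ≤ ∑ i : Fin n, dist (x (σ i)) (x (σ (i + 1))) ^ k := by
  classical
  set a : EuclideanSpace ℝ (Fin k) := 0 with ha
  set b : EuclideanSpace ℝ (Fin k) := WithLp.toLp 2 (fun _ => 1) with hb
  have hdist : dist a b = Real.sqrt k := by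
    rw [EuclideanSpace.dist_eq]
    simp [ha, hb]
  set x : Fin n → EuclideanSpace ℝ (Fin k) := fun j => if j = 0 then a else b with hx
  refine ⟨x, ?_, ?_⟩
  · intro j i
    by_cases h : j = 0 <;> simp [hx, h, ha, hb]
  · intro σ
    set i₀ := σ.symm 0 with hi₀
    have hone : (1 : Fin n) ≠ 0 := by
      have hv : (1 : Fin n).val = 1 % n := Fin.val_one' n
      intro h
      rw [h] at hv
      rw [Nat.mod_eq_of_lt (by omega : 1 < n)] at hv
      simp at hv
    have h1 : i₀ - 1 ≠ i₀ := by
      intro h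
      have := sub_eq_self.mp h
      exact hone this
    have hσ0 : σ i₀ = 0 := Equiv.apply_symm_apply σ 0
    have hσp : σ (i₀ + 1) ≠ 0 := by
      intro h
      have : i₀ + 1 = i₀ := by
        have := σ.injective (h.trans hσ0.symm)
        exact this
      have := add_eq_left.mp this
      exact hone this
    have hσm : σ (i₀ - 1) ≠ 0 := by
      intro h
      exact h1 (σ.injective (h.trans hσ0.symm))
    have hnonneg : ∀ i ∈ Finset.univ, i ∉ ({i₀ - 1, i₀} : Finset (Fin n)) →
        0 ≤ dist (x (σ i)) (x (σ (i + 1))) ^ k :=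
      fun i _ _ => pow_nonneg dist_nonneg k
    have hsub := Finset.sum_le_sum_of_subset_of_nonneg
      (Finset.subset_univ ({i₀ - 1, i₀} : Finset (Fin n))) hnonneg
    have hpair : ∑ i ∈ ({i₀ - 1, i₀} : Finset (Fin n)),
        dist (x (σ i)) (x (σ (i + 1))) ^ k = 2 * Real.sqrt k ^ k := by
      rw [Finset.sum_pair h1]
      have e1 : x (σ (i₀ - 1)) = b := by simp [hx, hσm]
      have e2 : i₀ - 1 + 1 = i₀ := sub_add_cancel i₀ 1
      have e3 : x (σ i₀) = a := by simp [hx, hσ0]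
      have e4 : x (σ (i₀ + 1)) = b := by simp [hx, hσp]
      rw [e2, e1, e3, e4, dist_comm b a, hdist]
      ring
    calc 2 * Real.sqrt k ^ k = _ := hpair.symm
      _ ≤ _ := hsub
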